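/- (Hyers–Ulam type statement) Let f : ℝ → ℝ be ε-convex, i.e., f(t x + (1-t) y) ≤ t f(x) + (1-t) f(y) + ε for all x, y and t ∈ [0,1]. Then the function g defined as the convex envelope (supremum of affine functions h with h ≤ f + 0) satisfies |f(x) - g(x)| ≤ ε for all x, i.e., there exists a convex function g with sup_x |f(x) - g(x)| ≤ ε. -/

import Mathlib

/-- Hyers–Ulam stability of convexity on the line: every continuous `ε`-convex
function `f : ℝ → ℝ` lies within `ε` of some convex function `g`. -/
theorem hyers_ulam_epsilon_convex (ε : ℝ) (hε : 0 ≤ ε) (f : ℝ → ℝ)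
    (hf : Continuous f)
    (hec : ∀ x y t : ℝ, 0 ≤ t → t ≤ 1 →
      f (t * x + (1 - t) * y) ≤ t * f x + (1 - t) * f y + ε) :
    ∃ g : ℝ → ℝ, ConvexOn ℝ Set.univ g ∧ ∀ x : ℝ, |f x - g x| ≤ ε := by
  -- key slope inequality
  have key : ∀ p x y : ℝ, x < p → p < y →
      (f p - ε - f x) / (p - x) ≤ (f y - f p + ε) / (y - p) := by
    intro p x y hx hy
    have hyx : (0:ℝ) < y - x := by linarith
    set t := (y - p) / (y - x) with ht
    have ht0 : 0 ≤ t := div_nonneg (by linarith) (by linarith)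
    have ht1 : t ≤ 1 := by rw [div_le_one hyx]; linarith
    have hcomb : t * x + (1 - t) * y = p := by
      rw [ht]
      field_simp [ht]
      ring
    have h0 := hec x y t ht0 ht1
    rw [hcomb] at h0
    have e1 : t * (y - x) = y - p := by rw [ht]; field_simp [ht]
    have e2 : (1 - t) * (y - x) = p - x := by rw [ht]; field_simp [ht]; ring
    have h3 := mul_le_mul_of_nonneg_right h0 hyx.le
    have h4 : f p * (y - x) ≤ f x * (y - p) + f y * (p - x) + ε * (y - x) := by
      calc f p * (y - x) ≤ (t * f x + (1 - t) * f y + ε) * (y - x) := h3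
        _ = f x * (t * (y - x)) + f y * ((1 - t) * (y - x)) + ε * (y - x) := by ring
        _ = f x * (y - p) + f y * (p - x) + ε * (y - x) := by rw [e1, e2]
    rw [div_le_div_iff₀ (by linarith) (by linarith)]
    nlinarith [h4]
  -- slope sets
  set Sl : ℝ → Set ℝ := fun p => (fun x => (f p - ε - f x) / (p - x)) '' Set.Iio p with hSl
  have hSne : ∀ p : ℝ, (Sl p).Nonempty := fun p => ⟨_, ⟨p - 1, by simp, rfl⟩⟩
  have hSbdd : ∀ p : ℝ, BddAbove (Sl p) := by
    intro p
    refine ⟨(f (p + 1) - f p + ε) / (p + 1 - p), ?_⟩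
    rintro _ ⟨x, hx, rfl⟩
    exact key p x (p + 1) hx (by linarith)
  set m : ℝ → ℝ := fun p => sSup (Sl p) with hm
  set h : ℝ → ℝ → ℝ := fun p x => f p - ε + m p * (x - p) with hh
  have hle : ∀ p x, h p x ≤ f x := by
    intro p x
    rcases lt_trichotomy x p with hlt | rfl | hgt
    · have h1 : (f p - ε - f x) / (p - x) ≤ m p := le_csSup (hSbdd p) ⟨x, hlt, rfl⟩
      have hpx : (0:ℝ) < p - x := by linarith
      rw [div_le_iff₀ hpx] at h1
      have : h p x = f p - ε - m p * (p - x) := by simp only [hh]; ring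
      linarith [this]
    · simp only [hh, sub_self, mul_zero, add_zero]
      linarith
    · have h1 : m p ≤ (f x - f p + ε) / (x - p) := by
        refine csSup_le (hSne p) ?_
        rintro _ ⟨z, hz, rfl⟩
        exact key p z x hz hgt
      have hxp : (0:ℝ) < x - p := by linarith
      rw [le_div_iff₀ hxp] at h1
      simp only [hh]
      linarith
  set S : ℝ → Set ℝ := fun x => Set.range (fun p => h p x) with hS
  have hgbdd : ∀ x, BddAbove (S x) := by
    intro x
    refine ⟨f x, ?_⟩
    rintro _ ⟨p, rfl⟩
    exact hle p x
  have hgne : ∀ x, (S x).Nonempty := fun x => ⟨h x x, ⟨x, rfl⟩⟩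
  refine ⟨fun x => sSup (S x), ⟨convex_univ, ?_⟩, ?_⟩
  · intro x _ y _ a b ha hb hab
    simp only [smul_eq_mul]
    refine csSup_le (hgne _) ?_
    rintro _ ⟨p, rfl⟩
    show h p (a * x + b * y) ≤ a * sSup (S x) + b * sSup (S y)
    have hb' : b = 1 - a := by linarith
    have e : h p (a * x + b * y) = a * h p x + b * h p y := by
      simp only [hh]; rw [hb']; ring
    rw [e]
    exact add_le_add
      (mul_le_mul_of_nonneg_left (le_csSup (hgbdd x) ⟨p, rfl⟩) ha)
      (mul_le_mul_of_nonneg_left (le_csSup (hgbdd y) ⟨p, rfl⟩) hb)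
  · intro x
    have h1 : sSup (S x) ≤ f x := csSup_le (hgne x) (by rintro _ ⟨p, rfl⟩; exact hle p x)
    have h2 : f x - ε ≤ sSup (S x) := by
      have h3 := le_csSup (hgbdd x) (⟨x, rfl⟩ : h x x ∈ S x)
      have hxx : h x x = f x - ε := by simp [hh]
      linarith [hxx ▸ h3]
    rw [abs_le]
    constructor <;> linarith
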